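/- Second step of the singular-part recursion, case 3 (justification of continuing the search): assume A = Φ * Ψ in AddMonoidAlgebra ℝ ℝ with data as in the context and N ≥ 2, L ≥ 2, K ≥ 2. If β₂ = ζ₁ + κ₂ and α₂ = φ₁·ψ₂, then ζ₂ + κ₁ > β₂; consequently ζ₂ + κ₁ belongs to the support of A and equals βₙ for some index n ≥ 3. -/

import Mathlib

/-- Second step of the singular-part recursion, case 3 (justification of
continuing the search): if `A = Φ * Ψ` with the leaf-peeling singular data,
`β₂ = ζ₁ + κ₂` and `α₂ = φ₁·ψ₂`, then `ζ₂ + κ₁ > β₂`; consequently `ζ₂ + κ₁`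
belongs to the support of `A` and equals `βₙ` for some index `n ≥ 3`
(i.e. some zero-based index `n` with `2 ≤ n`). -/
theorem singular_recursion_second_step_case3
    (N L K : ℕ) (hN : 2 ≤ N) (hL : 2 ≤ L) (hK : 2 ≤ K)
    (β : Fin N → ℝ) (ζ : Fin L → ℝ) (κ : Fin K → ℝ)
    (hβ : StrictMono β) (hζ : StrictMono ζ) (hκ : StrictMono κ)
    (α : Fin N → ℝ) (φ : Fin L → ℝ) (ψ : Fin K → ℝ)
    (hα : ∀ n, α n ≠ 0) (hφ : ∀ l, 0 < φ l) (hψ : ∀ k, 0 < ψ k)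
    (A Φ Ψ : AddMonoidAlgebra ℝ ℝ)
    (hA : A = ∑ n, AddMonoidAlgebra.single (β n) (α n))
    (hΦ : Φ = ∑ l, AddMonoidAlgebra.single (ζ l) (φ l))
    (hΨ : Ψ = ∑ k, AddMonoidAlgebra.single (κ k) (ψ k))
    (hSing : A = Φ * Ψ)
    (hcase : β ⟨1, hN⟩ = ζ ⟨0, by omega⟩ + κ ⟨1, hK⟩)
    (hcase' : α ⟨1, hN⟩ = φ ⟨0, by omega⟩ * ψ ⟨1, hK⟩) :
    ζ ⟨1, hL⟩ + κ ⟨0, by omega⟩ > β ⟨1, hN⟩ ∧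
      ζ ⟨1, hL⟩ + κ ⟨0, by omega⟩ ∈ A.coeff.support ∧
      ∃ n : Fin N, 2 ≤ (n : ℕ) ∧ ζ ⟨1, hL⟩ + κ ⟨0, by omega⟩ = β n := by
  have hA' : ∀ x : ℝ, A.coeff x = ∑ n, if β n = x then α n else 0 := by
    intro x; simp [hA, AddMonoidAlgebra.coeff_sum, AddMonoidAlgebra.coeff_single, Finsupp.finset_sum_apply, Finsupp.single_apply]
  have hB : Φ * Ψ = ∑ l, ∑ k, AddMonoidAlgebra.single (ζ l + κ k) (φ l * ψ k) := by
    rw [hΦ, hΨ, Finset.sum_mul_sum]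
    simp [AddMonoidAlgebra.single_mul_single]
  have hB' : ∀ x : ℝ, (Φ * Ψ).coeff x = ∑ l, ∑ k, if ζ l + κ k = x then φ l * ψ k else 0 := by
    intro x
    rw [hB]
    simp only [AddMonoidAlgebra.coeff_sum, AddMonoidAlgebra.coeff_single, Finsupp.finset_sum_apply, Finsupp.single_apply]
  have hterm : ∀ (l : Fin L) (k : Fin K) (x : ℝ),
      0 ≤ (if ζ l + κ k = x then φ l * ψ k else 0) := by
    intro l k x
    split
    · exact le_of_lt (mul_pos (hφ l) (hψ k))
    · exact le_refl 0
  have hrow : ∀ (l : Fin L) (x : ℝ), 0 ≤ ∑ k, if ζ l + κ k = x then φ l * ψ k else 0 :=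
    fun l x => Finset.sum_nonneg fun k _ => hterm l k x
  have Bpos : ∀ (l : Fin L) (k : Fin K), 0 < (Φ * Ψ).coeff (ζ l + κ k) := by
    intro l k
    rw [hB']
    refine Finset.sum_pos' (fun l' _ => hrow l' _) ⟨l, Finset.mem_univ l, ?_⟩
    refine Finset.sum_pos' (fun k' _ => hterm l k' _) ⟨k, Finset.mem_univ k, ?_⟩
    simp [mul_pos (hφ l) (hψ k)]
  have hApos : ∀ (l : Fin L) (k : Fin K), A.coeff (ζ l + κ k) ≠ 0 := by
    intro l k; rw [hSing]; exact ne_of_gt (Bpos l k)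
  have Arange : ∀ x : ℝ, A.coeff x ≠ 0 → ∃ n, x = β n := by
    intro x hx
    rw [hA'] at hx
    obtain ⟨n, _, hn⟩ := Finset.exists_ne_zero_of_sum_ne_zero hx
    by_cases h : β n = x
    · exact ⟨n, h.symm⟩
    · simp [h] at hn
  have Aβ : ∀ n, A.coeff (β n) = α n := by
    intro n
    rw [hA', Finset.sum_eq_single n]
    · simp
    · intro m _ hmn
      rw [if_neg]
      exact fun h => hmn (hβ.injective h)
    · intro h; exact absurd (Finset.mem_univ n) h
  obtain ⟨m, hm⟩ := Arange _ (hApos ⟨0, by omega⟩ ⟨0, by omega⟩)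
  obtain ⟨n, hn⟩ := Arange _ (hApos ⟨1, hL⟩ ⟨0, by omega⟩)
  have hz01 : ζ (⟨0, by omega⟩ : Fin L) < ζ ⟨1, hL⟩ :=
    hζ (by exact Fin.mk_lt_mk.mpr (by omega))
  have hmn : m < n := by
    have : β m < β n := by
      rw [← hm, ← hn]; linarith
    exact hβ.lt_iff_lt.mp this
  have hmnn : (m : ℕ) < (n : ℕ) := hmn
  have hne1 : (n : ℕ) ≠ 1 := by
    intro h1
    have hn1 : n = ⟨1, hN⟩ := Fin.ext h1
    rw [hn1] at hn
    have key : α ⟨1, hN⟩ < (Φ * Ψ).coeff (β ⟨1, hN⟩) := by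
      rw [hB']
      have e0 : (⟨0, by omega⟩ : Fin L) ∈ (Finset.univ : Finset (Fin L)) :=
        Finset.mem_univ _
      rw [← Finset.add_sum_erase _ _ e0]
      have row0 : φ (⟨0, by omega⟩ : Fin L) * ψ (⟨1, hK⟩ : Fin K) ≤
          ∑ k, if ζ (⟨0, by omega⟩ : Fin L) + κ k = β ⟨1, hN⟩ then
            φ (⟨0, by omega⟩ : Fin L) * ψ k else 0 := by
        have := Finset.single_le_sum (f := fun k : Fin K =>
            if ζ (⟨0, by omega⟩ : Fin L) + κ k = β ⟨1, hN⟩ then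
              φ (⟨0, by omega⟩ : Fin L) * ψ k else 0)
          (fun k _ => hterm _ k _) (Finset.mem_univ (⟨1, hK⟩ : Fin K))
        simpa [← hcase] using this
      have row1 : φ (⟨1, hL⟩ : Fin L) * ψ (⟨0, by omega⟩ : Fin K) ≤
          ∑ k, if ζ (⟨1, hL⟩ : Fin L) + κ k = β ⟨1, hN⟩ then
            φ (⟨1, hL⟩ : Fin L) * ψ k else 0 := by
        have := Finset.single_le_sum (f := fun k : Fin K =>
            if ζ (⟨1, hL⟩ : Fin L) + κ k = β ⟨1, hN⟩ then
              φ (⟨1, hL⟩ : Fin L) * ψ k else 0)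
          (fun k _ => hterm _ k _) (Finset.mem_univ (⟨0, by omega⟩ : Fin K))
        simpa [hn] using this
      have erased : φ (⟨1, hL⟩ : Fin L) * ψ (⟨0, by omega⟩ : Fin K) ≤
          ∑ l ∈ (Finset.univ.erase (⟨0, by omega⟩ : Fin L)),
            ∑ k, if ζ l + κ k = β ⟨1, hN⟩ then φ l * ψ k else 0 := by
        refine le_trans row1 ?_
        refine Finset.single_le_sum (fun l _ => hrow l _) ?_
        refine Finset.mem_erase.mpr ⟨?_, Finset.mem_univ _⟩
        exact fun h => by simpa using congrArg Fin.val h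
      have hpos : 0 < φ (⟨1, hL⟩ : Fin L) * ψ (⟨0, by omega⟩ : Fin K) :=
        mul_pos (hφ _) (hψ _)
      rw [hcase']
      linarith
    rw [← hSing, Aβ] at key
    exact lt_irrefl _ key
  have hn2 : 2 ≤ (n : ℕ) := by omega
  have h1n : (1 : ℕ) < (n : ℕ) := by omega
  have hβn : β ⟨1, hN⟩ < β n := hβ (by simpa [Fin.lt_def] using h1n)
  refine ⟨?_, ?_, n, hn2, hn⟩
  · rw [hn]; exact hβn
  · rw [Finsupp.mem_support_iff]; exact hApos _ _
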